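/- For every n ≥ 2, the number of fixed-point-free permutations of [n] with exactly one descent is 2^{n−2}; that is, #{π ∈ S_n : fix(π) = 0 and des(π) = 1} = 2^{n−2}. -/

import Mathlib

open scoped Classical

namespace KArr

/-- Positive reduction of a word over ℤ: each positive letter is replaced by its
rank among the distinct positive letters of the word; negative letters unchanged. -/
def posReduce (w : List ℤ) : List ℤ :=
  w.map fun x => if 0 < x then ((w.toFinset.filter fun y => 0 < y ∧ y ≤ x).card : ℤ) else x

/-- The set of descents of a word (1-indexed: `i` is a descent iff `w_i > w_{i+1}`). -/
def desSet (w : List ℤ) : Finset ℕ :=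
  (Finset.range w.length).filter fun i => 1 ≤ i ∧ w.getD i 0 < w.getD (i - 1) 0

/-- The number of descents of a word. -/
def desNum (w : List ℤ) : ℕ := (desSet w).card

/-- The subword of positive letters. -/
def posPart (w : List ℤ) : List ℤ := w.filter fun x => decide (0 < x)

/-- A `k`-arrangement of `[n]`: a permutation together with a color in `Fin k`
attached to each fixed point (encoded as a total coloring that is `0` off the
fixed points). -/
abbrev Arrangement (n k : ℕ) :=
  {x : Equiv.Perm (Fin n) × (Fin n → Fin k) // ∀ j, x.1 j ≠ j → (x.2 j : ℕ) = 0}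

/-- The derangement form of a `k`-arrangement: replace each fixed point by the
negative letter recording its color, then positively reduce.  (Color `c : Fin k`
encodes the letter `¬(c+1) = -(c+1)`.) -/
def dfWord {n k : ℕ} (a : Arrangement n k) : List ℤ :=
  posReduce <| (List.finRange n).map fun i =>
    if a.1.1 i = i then -(((a.1.2 i : ℕ) : ℤ) + 1) else ((a.1.1 i : ℕ) : ℤ) + 1

/-- The permutation form of a `k`-arrangement: replace each fixed point whose
color is not `¬k` by the corresponding negative letter, then positively reduce. -/
def pfWord {n k : ℕ} (a : Arrangement n k) : List ℤ :=
  posReduce <| (List.finRange n).map fun i =>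
    if a.1.1 i = i ∧ (a.1.2 i : ℕ) + 1 ≠ k then -(((a.1.2 i : ℕ) : ℤ) + 1)
    else ((a.1.1 i : ℕ) : ℤ) + 1

/-- `fix_i(a)`: the number of fixed points of the base permutation with color `c`. -/
noncomputable def fixCount {n k : ℕ} (a : Arrangement n k) (c : Fin k) : ℕ :=
  Nat.card {i : Fin n // a.1.1 i = i ∧ a.1.2 i = c}

/-- `DEZ(a)`, the descent set of the derangement form. -/
def DEZset {n k : ℕ} (a : Arrangement n k) : Finset ℕ := desSet (dfWord a)

/-- `DES(a)`, the descent set of the permutation form. -/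
def DESset {n k : ℕ} (a : Arrangement n k) : Finset ℕ := desSet (pfWord a)

/-- `dez(a)`, the number of descents of the derangement form. -/
def dez {n k : ℕ} (a : Arrangement n k) : ℕ := desNum (dfWord a)

/-- `des(a)`, the number of descents of the permutation form. -/
def des {n k : ℕ} (a : Arrangement n k) : ℕ := desNum (pfWord a)

/-- `Der(a)`, the derangement part: the positive subword of the derangement form. -/
def Der {n k : ℕ} (a : Arrangement n k) : List ℤ := posPart (dfWord a)

/-- One-line notation of a permutation of `[n]`, as a word over `ℤ` with letters `1,…,n`. -/
def oneLine {n : ℕ} (π : Equiv.Perm (Fin n)) : List ℤ :=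
  (List.finRange n).map fun i => ((π i : ℕ) : ℤ) + 1

/-- A word `w` contains the pattern `p` if some subsequence of `w` of the same
length as `p` is order-isomorphic to `p` (entrywise strict inequalities match). -/
def Contains (w p : List ℤ) : Prop :=
  ∃ s : List ℤ, s.Sublist w ∧ s.length = p.length ∧
    ∀ i j, i < p.length → j < p.length →
      (s.getD i 0 < s.getD j 0 ↔ p.getD i 0 < p.getD j 0)

/-- A word avoids a pattern if it does not contain it. -/
def Avoids (w p : List ℤ) : Prop := ¬ Contains w p


/-- `dez`-word of a permutation: replace each fixed point by `¬1 = -1`,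
then positively reduce (the `1`-arrangement derangement form). -/
def dzWordPerm {n : ℕ} (π : Equiv.Perm (Fin n)) : List ℤ :=
  posReduce <| (List.finRange n).map fun i =>
    if π i = i then (-1 : ℤ) else ((π i : ℕ) : ℤ) + 1

/-- The weak derangement part `Der_k(a)`: the derangement form with all letters `¬k` removed. -/
def wDer {n k : ℕ} (a : Arrangement n k) : List ℤ :=
  (dfWord a).filter fun x => decide (x ≠ -(k : ℤ))

/-- For a word `w` which is a derangement form, position `j` (0-indexed) of `w` is an
excedance of the base permutation iff the letter is positive and exceeds the number
of positive letters among the first `j+1` letters. -/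
def isExcAt (w : List ℤ) (j : ℕ) : Prop :=
  ((((w.take (j + 1)).filter fun x => decide (0 < x)).length : ℤ)) < w.getD j 0

/-- `e_i = E` for the (1-indexed) letter positions `0 ≤ i ≤ m+1` of `w`, with the
boundary conventions `e_0 = e_{m+1} = E`. -/
def slotE (w : List ℤ) (i : ℕ) : Prop :=
  i = 0 ∨ i = w.length + 1 ∨ isExcAt w (i - 1)

/-- `w_i > w_{i+1}` (1-indexed letters) with the conventions `w_0 = w_{m+1} = +∞`;
this is the descent condition attached to slot `i`, `0 ≤ i ≤ m`. -/
def slotGt (w : List ℤ) (i : ℕ) : Prop :=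
  i = 0 ∨ (i < w.length ∧ w.getD i 0 < w.getD (i - 1) 0)

/-- Slot `i` is of type I: `w_i > w_{i+1}` and `(e_i, e_{i+1}) = (E, N)`. -/
def typeI (w : List ℤ) (i : ℕ) : Prop := slotGt w i ∧ slotE w i ∧ ¬ slotE w (i + 1)

/-- Slot `i` is of type II: `w_i ≤ w_{i+1}` and `(e_i, e_{i+1}) = (N, E)`. -/
def typeII (w : List ℤ) (i : ℕ) : Prop := ¬ slotGt w i ∧ ¬ slotE w i ∧ slotE w (i + 1)

/-- Slot `i` is of type III: `w_i ≤ w_{i+1}` and `(e_i, e_{i+1}) ≠ (N, E)`. -/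
def typeIII (w : List ℤ) (i : ℕ) : Prop := ¬ slotGt w i ∧ ¬ (¬ slotE w i ∧ slotE w (i + 1))

/-- Slot `i` is of type IV: `w_i > w_{i+1}` and `(e_i, e_{i+1}) ≠ (E, N)`. -/
def typeIV (w : List ℤ) (i : ℕ) : Prop := slotGt w i ∧ ¬ (slotE w i ∧ ¬ slotE w (i + 1))

/-- The length `s_i` of the `i`-th slot of the word `u` (a derangement form),
where the slot letters are the letters equal to `c` (`= ¬k`). -/
def slotLen (u : List ℤ) (c : ℤ) (i : ℕ) : ℕ :=
  let L := (List.range u.length).filter fun j => decide (u.getD j 0 ≠ c)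
  (if i < L.length then L.getD i 0 else u.length) - (if i = 0 then 0 else L.getD (i - 1) 0 + 1)

/-- The number of peaks of a word: indices `i` (1-indexed, `2 ≤ i ≤ n-1`)
with `w_{i-1} < w_i > w_{i+1}`. -/
def peakNum (w : List ℤ) : ℕ :=
  ((List.range w.length).filter fun i => decide (0 < i ∧ i + 1 < w.length ∧
    w.getD (i - 1) 0 < w.getD i 0 ∧ w.getD (i + 1) 0 < w.getD i 0)).length

/-- Number of fixed points of a permutation. -/
noncomputable def fixNum {n : ℕ} (π : Equiv.Perm (Fin n)) : ℕ :=
  Nat.card {i : Fin n // π i = i}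

/-- Number of excedances of a permutation. -/
noncomputable def excNum {n : ℕ} (π : Equiv.Perm (Fin n)) : ℕ :=
  Nat.card {i : Fin n // i < π i}

/-- Number of anti-excedances of a permutation. -/
noncomputable def aexcNum {n : ℕ} (π : Equiv.Perm (Fin n)) : ℕ :=
  Nat.card {i : Fin n // π i < i}

/-- `ldes` of a word: the smallest `i` which is a descent or equals the length
(0 for the empty word). -/
def ldesW (w : List ℤ) : ℕ :=
  (((List.range (w.length + 1)).filter fun i =>
    decide ((1 ≤ i ∧ i < w.length ∧ w.getD i 0 < w.getD (i - 1) 0) ∨ i = w.length))).headD 0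

/-- `rdes` of a word: the length minus the position of the rightmost descent
(`sSup ∅ = 0` when there is no descent). -/
def rdesW (w : List ℤ) : ℕ :=
  w.length - ((List.range w.length).filter fun i =>
    decide (1 ≤ i ∧ w.getD i 0 < w.getD (i - 1) 0)).foldr max 0

/-- Number of crossing descents of a permutation: (1-indexed) descents `i` with
`σ(i) ≥ i+1 ≥ σ(i+1)`. -/
def xdesW (w : List ℤ) : ℕ :=
  ((List.range w.length).filter fun i : ℕ =>
    decide (1 ≤ i ∧ (i : ℤ) + 1 ≤ w.getD (i - 1) 0 ∧ w.getD i 0 ≤ (i : ℤ) + 1)).length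

/-- Number of crossing descents of a permutation. -/
def xdesNum {n : ℕ} (σ : Equiv.Perm (Fin n)) : ℕ := xdesW (oneLine σ)

/-- A height sequence `d` encodes a Dyck path: it is weakly increasing and `d_i ≤ i - 1`
(1-indexed), i.e. `d.getD i 0 ≤ i` (0-indexed). -/
def IsDyck (d : List ℕ) : Prop :=
  List.Pairwise (· ≤ ·) d ∧ ∀ i < d.length, d.getD i 0 ≤ i

/-- Number of hills of a Dyck path: east steps of height equal to their index that
touch the diagonal and are immediately followed by a north step. -/
def hillNum (d : List ℕ) : ℕ :=
  ((List.range d.length).filter fun i => decide (d.getD i 0 = i ∧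
    (i + 1 = d.length ∨ d.getD i 0 < d.getD (i + 1) 0))).length

/-- Number of segments of a Dyck path: maximal runs of at least two consecutive
equal heights (counted by their starting index). -/
def segNum (d : List ℕ) : ℕ :=
  ((List.range d.length).filter fun i => decide (i + 1 < d.length ∧
    d.getD i 0 = d.getD (i + 1) 0 ∧ (i = 0 ∨ d.getD (i - 1) 0 ≠ d.getD i 0))).length

/-- `lseg`: the (1-indexed) position of the last step of the leftmost segment,
or `n+1` if there is no segment. -/
def lsegNum (d : List ℕ) : ℕ :=
  (((List.range (d.length + 2)).filter fun i =>
    decide ((2 ≤ i ∧ i ≤ d.length ∧ d.getD (i - 2) 0 = d.getD (i - 1) 0 ∧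
      (i = d.length ∨ d.getD (i - 1) 0 ≠ d.getD i 0)) ∨ i = d.length + 1))).headD 0

/-- Dyck paths of semilength `n`, encoded as monotone functions `Fin n → Fin (n+1)`
bounded by the diagonal (their height sequences). -/
def DyckFinset (n : ℕ) : Finset (Fin n → Fin (n + 1)) :=
  Finset.univ.filter fun f =>
    (∀ i j : Fin n, i ≤ j → f i ≤ f j) ∧ ∀ i : Fin n, (f i : ℕ) ≤ (i : ℕ)

/-- The height sequence of a function `Fin n → Fin (n+1)` as a list. -/
def hList {n : ℕ} (f : Fin n → Fin (n + 1)) : List ℕ :=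
  (List.finRange n).map fun i => (f i : ℕ)


section Proof
variable {n : ℕ}

lemma oneLine_length (π : Equiv.Perm (Fin n)) : (oneLine π).length = n := by
  simp [oneLine]

lemma oneLine_getD (π : Equiv.Perm (Fin n)) (i : ℕ) (h : i < n) :
    (oneLine π).getD i 0 = ((π ⟨i, h⟩ : ℕ) : ℤ) + 1 := by
  rw [oneLine, List.getD_eq_getElem _ _ (by simpa using h)]
  simp

lemma mem_desSet_oneLine (π : Equiv.Perm (Fin n)) (i : ℕ) :
    i ∈ desSet (oneLine π) ↔ ∃ (h1 : 1 ≤ i) (h : i < n),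
      π ⟨i, h⟩ < π ⟨i - 1, by omega⟩ := by
  simp only [desSet, Finset.mem_filter, Finset.mem_range, oneLine_length]
  constructor
  · rintro ⟨h, h1, hlt⟩
    refine ⟨h1, h, ?_⟩
    rw [oneLine_getD π i h, oneLine_getD π (i-1) (by omega)] at hlt
    rw [Fin.lt_def]; omega
  · rintro ⟨h1, h, hlt⟩
    refine ⟨h, h1, ?_⟩
    rw [oneLine_getD π i h, oneLine_getD π (i-1) (by omega)]
    rw [Fin.lt_def] at hlt; omega

lemma fixNum_eq_zero_iff (π : Equiv.Perm (Fin n)) :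
    fixNum π = 0 ↔ ∀ i, π i ≠ i := by
  rw [fixNum, Nat.card_eq_zero]
  constructor
  · rintro (h | h) i hi
    · exact h.elim' ⟨i, hi⟩
    · exact absurd h (fun hinf => not_finite {i : Fin n // π i = i})
  · intro h
    exact Or.inl ⟨fun x => h x.1 x.2⟩

/-- compl card -/
lemma card_compl_fin (S : Finset (Fin n)) : Sᶜ.card = n - S.card := by
  rw [Finset.card_compl, Fintype.card_fin]

noncomputable def permFun (S : Finset (Fin n)) (i : Fin n) : Fin n :=
  if h : (i : ℕ) < S.card then S.orderEmbOfFin rfl ⟨i, h⟩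
  else Sᶜ.orderEmbOfFin (card_compl_fin S) ⟨(i : ℕ) - S.card, by have := i.isLt; omega⟩

lemma permFun_injective (S : Finset (Fin n)) : Function.Injective (permFun S) := by
  intro i j hij
  unfold permFun at hij
  split_ifs at hij with hi hj hj
  · have h2 : (⟨(i:ℕ), hi⟩ : Fin S.card) = ⟨(j:ℕ), hj⟩ := (S.orderEmbOfFin rfl).injective hij
    have h3 : (i : ℕ) = (j : ℕ) := by simpa [Fin.mk.injEq] using h2
    exact Fin.ext h3
  · exact absurd ((Finset.mem_compl).mp (Finset.orderEmbOfFin_mem _ _ _)) (by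
      rw [← hij] at *; simp [Finset.orderEmbOfFin_mem])
  · exact absurd ((Finset.mem_compl).mp (Finset.orderEmbOfFin_mem _ _ _)) (by
      rw [hij] at *; simp [Finset.orderEmbOfFin_mem])
  · have h2 := (Sᶜ.orderEmbOfFin (card_compl_fin S)).injective hij
    have h3 : (i : ℕ) - S.card = (j : ℕ) - S.card := congrArg Fin.val h2
    exact Fin.ext (by omega)

noncomputable def permOf (S : Finset (Fin n)) : Equiv.Perm (Fin n) :=
  Equiv.ofBijective _ (Finite.injective_iff_bijective.mp (permFun_injective S))

lemma permOf_apply (S : Finset (Fin n)) (i : Fin n) : permOf S i = permFun S i := rfl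

lemma permOf_mem (S : Finset (Fin n)) (i : Fin n) (h : (i : ℕ) < S.card) :
    permOf S i ∈ S := by
  rw [permOf_apply, permFun, dif_pos h]; exact Finset.orderEmbOfFin_mem _ _ _

lemma permOf_not_mem (S : Finset (Fin n)) (i : Fin n) (h : ¬ (i : ℕ) < S.card) :
    permOf S i ∈ Sᶜ := by
  rw [permOf_apply, permFun, dif_neg h]; exact Finset.orderEmbOfFin_mem _ _ _

lemma mem_iff_symm_lt (S : Finset (Fin n)) (x : Fin n) :
    x ∈ S ↔ ((permOf S).symm x : ℕ) < S.card := by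
  constructor
  · intro hx
    by_contra h
    have := permOf_not_mem S ((permOf S).symm x) h
    rw [Equiv.apply_symm_apply] at this
    exact (Finset.mem_compl.mp this) hx
  · intro h
    have := permOf_mem S ((permOf S).symm x) h
    rwa [Equiv.apply_symm_apply] at this

lemma sm_le {k : ℕ} {f : Fin k → Fin n} (hf : StrictMono f) :
    ∀ m : ℕ, ∀ h : m < k, m ≤ (f ⟨m, h⟩ : ℕ) := by
  intro m
  induction m with
  | zero => intro h; exact Nat.zero_le _
  | succ m ih =>
    intro h
    have h1 : (⟨m, by omega⟩ : Fin k) < ⟨m+1, h⟩ := by simp [Fin.lt_def]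
    have h2 := hf h1
    have h3 := ih (by omega)
    rw [Fin.lt_def] at h2; omega

lemma sm_ub {k : ℕ} (hk : k ≤ n) {f : Fin k → Fin n} (hf : StrictMono f) :
    ∀ t m : ℕ, ∀ h : m < k, m + t + 1 = k → (f ⟨m, h⟩ : ℕ) ≤ n - k + m := by
  intro t
  induction t with
  | zero => intro m h hm; have := (f ⟨m, h⟩).isLt; omega
  | succ t ih =>
    intro m h hm
    have h2 : m + 1 < k := by omega
    have h3 := ih (m+1) h2 (by omega)
    have hlt := hf (show (⟨m,h⟩ : Fin k) < ⟨m+1,h2⟩ by simp [Fin.lt_def])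
    rw [Fin.lt_def] at hlt; omega

lemma sm_fix_down {k : ℕ} {f : Fin k → Fin n} (hf : StrictMono f) :
    ∀ m : ℕ, ∀ hm : m < k, (f ⟨m, hm⟩ : ℕ) = m → (f ⟨0, by omega⟩ : ℕ) = 0 := by
  intro m
  induction m with
  | zero => intro hm heq; exact heq
  | succ m ih =>
    intro hm heq
    have hm' : m < k := by omega
    apply ih hm'
    have hlt := hf (show (⟨m,hm'⟩ : Fin k) < ⟨m+1,hm⟩ by simp [Fin.lt_def])
    have hle := sm_le hf m hm'
    rw [Fin.lt_def] at hlt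
    omega

lemma sm_fix_up {k : ℕ} (hk : k ≤ n) {f : Fin k → Fin n} (hf : StrictMono f) :
    ∀ t m : ℕ, ∀ hm : m < k, m + t + 1 = k → (f ⟨m, hm⟩ : ℕ) = n - k + m →
      (f ⟨k - 1, by omega⟩ : ℕ) = n - 1 := by
  intro t
  induction t with
  | zero =>
    intro m hm ht heq
    have : m = k - 1 := by omega
    subst this
    rw [heq]; omega
  | succ t ih =>
    intro m hm ht heq
    have h2 : m + 1 < k := by omega
    apply ih (m+1) h2 (by omega)
    have hlt := hf (show (⟨m,hm⟩ : Fin k) < ⟨m+1,h2⟩ by simp [Fin.lt_def])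
    have hub := sm_ub hk hf t (m+1) h2 (by omega)
    rw [Fin.lt_def] at hlt
    omega

lemma permOf_eq_first (S : Finset (Fin n)) (i : ℕ) (h : i < S.card) (hn : i < n) :
    permOf S ⟨i, hn⟩ = S.orderEmbOfFin rfl ⟨i, h⟩ := by
  rw [permOf_apply, permFun, dif_pos h]

lemma permOf_eq_second (S : Finset (Fin n)) (i : ℕ) (h : ¬ i < S.card) (hn : i < n) :
    permOf S ⟨i, hn⟩ = Sᶜ.orderEmbOfFin (card_compl_fin S) ⟨i - S.card, by omega⟩ := by
  rw [permOf_apply, permFun, dif_neg h]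

lemma card_lt (S : Finset (Fin n)) (hn : 2 ≤ n) (h0 : (⟨0, by omega⟩ : Fin n) ∉ S) : S.card < n := by
  have h1 : S.card ≤ n := by
    have := Finset.card_le_univ S
    simpa using this
  rcases h1.lt_or_eq with h | h
  · exact h
  · exfalso
    apply h0
    have : S = Finset.univ := Finset.eq_univ_of_card S (by simpa using h)
    simp [this]

lemma card_pos' (S : Finset (Fin n)) (hn : 2 ≤ n) (hl : (⟨n-1, by omega⟩ : Fin n) ∈ S) :
    0 < S.card := Finset.card_pos.mpr ⟨_, hl⟩

lemma permOf_fixfree (S : Finset (Fin n)) (hn : 2 ≤ n)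
    (h0 : (⟨0, by omega⟩ : Fin n) ∉ S) (hl : (⟨n-1, by omega⟩ : Fin n) ∈ S) :
    ∀ i, permOf S i ≠ i := by
  intro i hi
  set k := S.card with hk
  have hkn : k < n := card_lt S hn h0
  have hkp : 0 < k := card_pos' S hn hl
  by_cases h : (i : ℕ) < k
  · -- first run
    have he := permOf_eq_first S i h i.isLt
    rw [Fin.eta] at he
    rw [hi] at he
    have hval : ((S.orderEmbOfFin rfl ⟨(i:ℕ), h⟩ : Fin n) : ℕ) = (i : ℕ) :=
      (congrArg Fin.val he).symm
    have h00 := sm_fix_down (S.orderEmbOfFin rfl).strictMono (i : ℕ) h hval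
    apply h0
    have hmem := S.orderEmbOfFin_mem rfl ⟨0, by omega⟩
    have : (S.orderEmbOfFin rfl ⟨0, by omega⟩ : Fin n) = ⟨0, by omega⟩ := Fin.ext h00
    rwa [this] at hmem
  · -- second run
    have he := permOf_eq_second S (i:ℕ) h i.isLt
    rw [Fin.eta] at he
    rw [hi] at he
    have hcc : Sᶜ.card = n - k := card_compl_fin S
    have hkc : n - k ≤ n := by omega
    have hval : ((Sᶜ.orderEmbOfFin hcc ⟨(i:ℕ) - k, by have := i.isLt; omega⟩ : Fin n) : ℕ)
        = n - (n - k) + ((i:ℕ) - k) := by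
      rw [← he]; have := i.isLt; omega
    have hlast := sm_fix_up hkc (Sᶜ.orderEmbOfFin hcc).strictMono
      (n - k - 1 - ((i:ℕ) - k)) ((i:ℕ) - k) (by have := i.isLt; omega)
      (by have := i.isLt; omega) hval
    have hmem := Sᶜ.orderEmbOfFin_mem hcc ⟨n - k - 1, by omega⟩
    have heq2 : (Sᶜ.orderEmbOfFin hcc ⟨n - k - 1, by omega⟩ : Fin n) = ⟨n-1, by omega⟩ :=
      Fin.ext hlast
    rw [heq2, Finset.mem_compl] at hmem
    exact hmem hl

set_option maxHeartbeats 1000000 in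
lemma desSet_permOf (S : Finset (Fin n)) (hn : 2 ≤ n)
    (h0 : (⟨0, by omega⟩ : Fin n) ∉ S) (hl : (⟨n-1, by omega⟩ : Fin n) ∈ S) :
    desSet (oneLine (permOf S)) = {S.card} := by
  have hkn : S.card < n := card_lt S hn h0
  have hkp : 0 < S.card := card_pos' S hn hl
  ext i
  rw [Finset.mem_singleton, mem_desSet_oneLine]
  constructor
  · rintro ⟨h1, h, hlt⟩
    by_contra hik
    rcases Nat.lt_or_ge i S.card with hik2 | hik2
    · have e1 := permOf_eq_first S i hik2 h
      have e2 := permOf_eq_first S (i-1) (by omega) (by omega)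
      rw [e1, e2] at hlt
      have hmono := (S.orderEmbOfFin rfl).strictMono
        (show (⟨i-1, by omega⟩ : Fin S.card) < ⟨i, hik2⟩ by
          rw [Fin.lt_def]; simp; omega)
      exact absurd hlt (not_lt.mpr hmono.le)
    · have hik3 : S.card < i := by omega
      have e1 := permOf_eq_second S i (by omega) h
      have e2 := permOf_eq_second S (i-1) (by omega) (by omega)
      rw [e1, e2] at hlt
      have hmono := (Sᶜ.orderEmbOfFin (card_compl_fin S)).strictMono
        (show (⟨i-1-S.card, by omega⟩ : Fin (n - S.card)) < ⟨i-S.card, by omega⟩ by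
          rw [Fin.lt_def]; simp; omega)
      exact absurd hlt (not_lt.mpr hmono.le)
  · rintro rfl
    refine ⟨by omega, by omega, ?_⟩
    have e1 := permOf_eq_second S S.card (by omega) (by omega)
    have e2 := permOf_eq_first S (S.card - 1) (by omega) (by omega)
    rw [e1, e2]
    have h0c : (⟨0, by omega⟩ : Fin n) ∈ Sᶜ := Finset.mem_compl.mpr h0
    have hz : ((Sᶜ.orderEmbOfFin (card_compl_fin S) ⟨S.card - S.card, by omega⟩ : Fin n) : ℕ) = 0 := by
      have hidx : (⟨S.card - S.card, by omega⟩ : Fin (n - S.card)) = ⟨0, by omega⟩ :=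
        Fin.ext (by simp)
      rw [hidx, Finset.orderEmbOfFin_zero]
      have hmin := Finset.min'_le Sᶜ ⟨0, by omega⟩ h0c
      have h2 := Fin.le_def.mp hmin
      simp at h2
      omega
    have hpos : 0 < ((S.orderEmbOfFin rfl ⟨S.card - 1, by omega⟩ : Fin n) : ℕ) := by
      have hmem := S.orderEmbOfFin_mem rfl ⟨S.card - 1, by omega⟩
      by_contra hz2
      push_neg at hz2
      have : (S.orderEmbOfFin rfl ⟨S.card - 1, by omega⟩ : Fin n) = ⟨0, by omega⟩ :=
        Fin.ext (by simp; omega)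
      rw [this] at hmem
      exact h0 hmem
    rw [Fin.lt_def]
    omega

lemma exists_S (π : Equiv.Perm (Fin n)) (hn : 2 ≤ n)
    (hfix : ∀ i, π i ≠ i) (hdes : desNum (oneLine π) = 1) :
    ∃ S : Finset (Fin n), (⟨0, by omega⟩ : Fin n) ∉ S ∧ (⟨n-1, by omega⟩ : Fin n) ∈ S ∧
      permOf S = π := by
  obtain ⟨d, hd⟩ := Finset.card_eq_one.mp hdes
  have hdmem : d ∈ desSet (oneLine π) := by rw [hd]; exact Finset.mem_singleton_self d
  rw [mem_desSet_oneLine] at hdmem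
  obtain ⟨hd1, hdn, hdlt⟩ := hdmem
  set u : ℕ → ℕ := fun i => if h : i < n then ((π ⟨i, h⟩ : Fin n) : ℕ) else 0 with hu
  have huval : ∀ i (h : i < n), u i = ((π ⟨i, h⟩ : Fin n) : ℕ) := by
    intro i h; simp [hu, h]
  have step : ∀ i, 1 ≤ i → i < n → i ≠ d → u (i-1) < u i := by
    intro i h1 h2 hne
    have hnotdes : i ∉ desSet (oneLine π) := by rw [hd]; simp [hne]
    rw [mem_desSet_oneLine] at hnotdes
    push_neg at hnotdes
    have hle := hnotdes h1 h2
    have hne2 : π ⟨i-1, by omega⟩ ≠ π ⟨i, h2⟩ := by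
      intro hcon
      have := π.injective hcon
      rw [Fin.mk.injEq] at this
      omega
    rw [huval (i-1) (by omega), huval i h2]
    exact lt_of_le_of_ne (Fin.le_def.mp hle) (fun hv => hne2 (Fin.ext hv))
  have stepd : u d < u (d-1) := by
    rw [huval d hdn, huval (d-1) (by omega)]
    rwa [Fin.lt_def] at hdlt
  have run1 : ∀ b, b < d → ∀ a, a ≤ b → u a ≤ u b := by
    intro b
    induction b with
    | zero =>
      intro _ a ha
      have : a = 0 := by omega
      subst this; exact le_refl _
    | succ b ih =>
      intro hb a ha
      rcases Nat.lt_or_ge a (b+1) with h | h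
      · have h2 := ih (by omega) a (by omega)
        have h3 := step (b+1) (by omega) (by omega) (by omega)
        simp only [Nat.add_sub_cancel] at h3
        omega
      · have : a = b + 1 := by omega
        subst this; exact le_refl _
  have run2 : ∀ b, b < n → ∀ a, d ≤ a → a ≤ b → u a ≤ u b := by
    intro b
    induction b with
    | zero =>
      intro _ a _ ha
      have : a = 0 := by omega
      subst this; exact le_refl _
    | succ b ih =>
      intro hb a hda ha
      rcases Nat.lt_or_ge a (b+1) with h | h
      · have h2 := ih (by omega) a hda (by omega)
        have h3 := step (b+1) (by omega) (by omega) (by omega)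
        simp only [Nat.add_sub_cancel] at h3
        omega
      · have : a = b + 1 := by omega
        subst this; exact le_refl _
  have hrange : ∀ m ∈ Finset.range d, m < n := fun m hm => by
    have := Finset.mem_range.mp hm; omega
  set S : Finset (Fin n) := Finset.image (⇑π) ((Finset.range d).attachFin hrange) with hS
  have hmemS : ∀ x : Fin n, x ∈ S ↔ ∃ j : Fin n, (j : ℕ) < d ∧ π j = x := by
    intro x
    simp only [hS, Finset.mem_image, Finset.mem_attachFin, Finset.mem_range]
  have hScard : S.card = d := by
    rw [hS, Finset.card_image_of_injective _ π.injective, Finset.card_attachFin,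
      Finset.card_range]
  have h0S : (⟨0, by omega⟩ : Fin n) ∉ S := by
    rw [hmemS]
    rintro ⟨j, hj, hjx⟩
    rcases Nat.eq_zero_or_pos (j : ℕ) with h | h
    · apply hfix j
      rw [hjx]
      exact Fin.ext (by simp [h])
    · have h3 := step (j : ℕ) h j.isLt (by omega)
      rw [huval _ j.isLt] at h3
      have : π ⟨(j:ℕ), j.isLt⟩ = π j := by rw [Fin.eta]
      rw [this, hjx] at h3
      simp at h3
  have hlS : (⟨n-1, by omega⟩ : Fin n) ∈ S := by
    rw [hmemS]
    by_contra hcon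
    push_neg at hcon
    set j : Fin n := π.symm ⟨n-1, by omega⟩ with hj
    have hjval : π j = ⟨n-1, by omega⟩ := Equiv.apply_symm_apply _ _
    have hjd : d ≤ (j : ℕ) := by
      by_contra h2
      push_neg at h2
      exact hcon j h2 hjval
    rcases Nat.lt_or_ge ((j:ℕ)+1) n with h2 | h2
    · have h3 := step ((j:ℕ)+1) (by omega) h2 (by omega)
      have h4 : ((j:ℕ)+1) - 1 = (j:ℕ) := by omega
      rw [h4, huval _ j.isLt, huval _ h2] at h3
      have h5 : π ⟨(j:ℕ), j.isLt⟩ = π j := by rw [Fin.eta]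
      rw [h5, hjval] at h3
      have h6 := (π ⟨(j:ℕ)+1, h2⟩).isLt
      simp at h3
      omega
    · have hjn : (j : ℕ) = n - 1 := by have := j.isLt; omega
      apply hfix j
      rw [hjval]
      exact Fin.ext (by simp [hjn])
  refine ⟨S, h0S, hlS, ?_⟩
  -- identify the two order embeddings
  have hf : S.orderEmbOfFin rfl = fun j : Fin S.card => π ⟨(j:ℕ), by
      have := j.isLt; omega⟩ := by
    symm
    apply Finset.orderEmbOfFin_unique
    · intro x
      rw [hmemS]
      exact ⟨⟨(x:ℕ), by have := x.isLt; omega⟩, by simpa using (by have := x.isLt; omega : (x:ℕ) < d), rfl⟩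
    · intro a b hab
      rw [Fin.lt_def] at hab
      rw [Fin.lt_def]
      have hlt : u (a:ℕ) < u (b:ℕ) := by
        have h1 := run1 ((b:ℕ)-1) (by have := b.isLt; omega) (a:ℕ) (by omega)
        have h2 := step (b:ℕ) (by omega) (by have := b.isLt; omega) (by have := b.isLt; omega)
        omega
      rw [huval (a:ℕ) (by have := a.isLt; omega), huval (b:ℕ) (by have := b.isLt; omega)] at hlt
      simpa using hlt
  have hg : Sᶜ.orderEmbOfFin (card_compl_fin S) = fun j : Fin (n - S.card) =>
      π ⟨S.card + (j:ℕ), by have := j.isLt; omega⟩ := by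
    symm
    apply Finset.orderEmbOfFin_unique
    · intro x
      rw [Finset.mem_compl, hmemS]
      rintro ⟨j, hjd2, hjx⟩
      have hinj := π.injective hjx
      rw [hinj] at hjd2
      simp at hjd2
      omega
    · intro a b hab
      rw [Fin.lt_def] at hab
      rw [Fin.lt_def]
      have hlt : u (S.card + (a:ℕ)) < u (S.card + (b:ℕ)) := by
        have h1 := run2 (S.card + (b:ℕ) - 1) (by have := b.isLt; omega)
          (S.card + (a:ℕ)) (by omega) (by omega)
        have h2 := step (S.card + (b:ℕ)) (by omega) (by have := b.isLt; omega)
          (by have := b.isLt; omega)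
        omega
      rw [huval (S.card + (a:ℕ)) (by have := a.isLt; omega),
        huval (S.card + (b:ℕ)) (by have := b.isLt; omega)] at hlt
      simpa using hlt
  apply Equiv.ext
  intro i
  rcases Nat.lt_or_ge (i : ℕ) S.card with h | h
  · have e1 := permOf_eq_first S (i:ℕ) h i.isLt
    rw [Fin.eta] at e1
    rw [e1, hf]
  · have e2 := permOf_eq_second S (i:ℕ) (by omega) i.isLt
    rw [Fin.eta] at e2
    rw [e2, hg]
    exact congrArg _ (Fin.ext (by simp only [Fin.val_mk]; omega))

lemma count_S (hn : 2 ≤ n) :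
    Nat.card {S : Finset (Fin n) //
      (⟨0, by omega⟩ : Fin n) ∉ S ∧ (⟨n-1, by omega⟩ : Fin n) ∈ S} = 2 ^ (n - 2) := by
  set z : Fin n := ⟨0, by omega⟩ with hz
  set l : Fin n := ⟨n-1, by omega⟩ with hl
  have hzl : z ≠ l := by
    rw [hz, hl, Fin.ne_iff_vne]; simp; omega
  set v : Finset (Fin n) := (Finset.univ.erase z).erase l with hv
  have e : {S : Finset (Fin n) // z ∉ S ∧ l ∈ S} ≃ ↥v.powerset :=
    { toFun := fun S => ⟨S.1.erase l, by
        rw [Finset.mem_powerset]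
        intro x hx
        rw [Finset.mem_erase] at hx
        rw [hv, Finset.mem_erase, Finset.mem_erase]
        refine ⟨hx.1, ?_, Finset.mem_univ x⟩
        intro hxz
        rw [hxz] at hx
        exact S.2.1 hx.2⟩
      invFun := fun T => ⟨insert l T.1, by
        constructor
        · intro hmem
          rcases Finset.mem_insert.mp hmem with h | h
          · exact hzl h
          · have := Finset.mem_powerset.mp T.2 h
            rw [hv, Finset.mem_erase, Finset.mem_erase] at this
            exact this.2.1 rfl
        · exact Finset.mem_insert_self _ _⟩
      left_inv := fun S => Subtype.ext (Finset.insert_erase S.2.2)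
      right_inv := fun T => Subtype.ext (by
        apply Finset.erase_insert
        intro hmem
        have := Finset.mem_powerset.mp T.2 hmem
        rw [hv, Finset.mem_erase] at this
        exact this.1 rfl) }
  rw [Nat.card_congr e, Nat.card_eq_fintype_card, Fintype.card_coe, Finset.card_powerset]
  congr 1
  have h1 : l ∈ Finset.univ.erase z := by
    rw [Finset.mem_erase]
    exact ⟨fun h => hzl h.symm, Finset.mem_univ l⟩
  rw [hv, Finset.card_erase_of_mem h1, Finset.card_erase_of_mem (Finset.mem_univ z)]
  simp
  omega

theorem main_count (hn : 2 ≤ n) :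
    Nat.card {π : Equiv.Perm (Fin n) // fixNum π = 0 ∧ desNum (oneLine π) = 1} =
    2 ^ (n - 2) := by
  have key : Nat.card {S : Finset (Fin n) //
      (⟨0, by omega⟩ : Fin n) ∉ S ∧ (⟨n-1, by omega⟩ : Fin n) ∈ S} =
      Nat.card {π : Equiv.Perm (Fin n) // fixNum π = 0 ∧ desNum (oneLine π) = 1} := by
    apply Nat.card_eq_of_bijective
      (f := fun S => ⟨permOf S.1,
        (fixNum_eq_zero_iff _).mpr (permOf_fixfree S.1 hn S.2.1 S.2.2), by
          show (desSet _).card = 1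
          rw [desSet_permOf S.1 hn S.2.1 S.2.2]
          exact Finset.card_singleton _⟩)
    constructor
    · intro S1 S2 h
      have hp : permOf S1.1 = permOf S2.1 := congrArg Subtype.val h
      have h1 := desSet_permOf S1.1 hn S1.2.1 S1.2.2
      have h2 := desSet_permOf S2.1 hn S2.2.1 S2.2.2
      rw [hp] at h1
      rw [h1] at h2
      have hc : S1.1.card = S2.1.card := by
        have := Finset.singleton_injective h2
        exact this
      apply Subtype.ext
      ext x
      rw [mem_iff_symm_lt, mem_iff_symm_lt, hp, hc]
    · rintro ⟨π, hfx, hds⟩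
      obtain ⟨S, h0, hl, hperm⟩ := exists_S π hn ((fixNum_eq_zero_iff π).mp hfx) hds
      exact ⟨⟨S, h0, hl⟩, Subtype.ext hperm⟩
  rw [← key, count_S hn]

end Proof

theorem stmt19 (n : ℕ) (hn : 2 ≤ n) :
    Nat.card {π : Equiv.Perm (Fin n) // fixNum π = 0 ∧ desNum (oneLine π) = 1} =
    2 ^ (n - 2) := by
  exact main_count hn

end KArr
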